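/- arXiv:2605.05605 — 2 statements merged into one kernel-verified Lean document; each statement's English description precedes it below -/
import Mathlib

section
/- Let Ψ(θ) = Fπ sin θ − 2F − Rω² + (1/2)fπ² − fθ(π − θ) with parameters satisfying 0 < 4(2F + Rω² − Fπ)/π² < f < 2F/π and f < Fπ/2. Then Ψ(0) < 0, Ψ(π) < 0, and Ψ(π/2) > 0; hence by the intermediate value theorem Ψ has at least one zero in (0, π/2) and at least one zero in (π/2, π). -/
open Real

noncomputable def Psi (F ω R f θ : ℝ) : ℝ :=
  F * π * Real.sin θ - 2*F - R*ω^2 + f*π^2/2 - f*θ*(π - θ)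

/-- In the regime 0 < f_sc < f < 2F/π (with f < Fπ/2 and positive parameters),
Ψ(0) < 0, Ψ(π) < 0, Ψ(π/2) > 0, hence Ψ has at least one zero in (0, π/2)
and at least one zero in (π/2, π). -/
theorem psi_two_zeros (F ω R f : ℝ)
    (hF : 0 < F) (hω : 0 < ω) (hR : 0 < R) (hf : 0 < f)
    (hsc0 : 0 < 4*(2*F + R*ω^2 - F*π)/π^2)
    (hsc : 4*(2*F + R*ω^2 - F*π)/π^2 < f)
    (himp : f < 2*F/π) (hfF : f < F*π/2) :
    Psi F ω R f 0 < 0 ∧ Psi F ω R f π < 0 ∧ 0 < Psi F ω R f (π/2) ∧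
    (∃ θ ∈ Set.Ioo (0:ℝ) (π/2), Psi F ω R f θ = 0) ∧
    (∃ θ ∈ Set.Ioo (π/2) π, Psi F ω R f θ = 0) := by
  have hπ : (0:ℝ) < π := Real.pi_pos
  have hπ2 : (0:ℝ) < π^2 := by positivity
  have hA : 0 < 2*F + R*ω^2 - F*π := by
    rcases div_pos_iff.mp hsc0 with ⟨h1, _⟩ | ⟨_, h2⟩
    · linarith
    · linarith
  have hfπ : f * π < 2*F := by
    exact (lt_div_iff₀ hπ).mp himp
  have hfq : 4*(2*F + R*ω^2 - F*π) < f * π^2 := by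
    have := (div_lt_iff₀ hπ2).mp hsc
    linarith
  have h0 : Psi F ω R f 0 < 0 := by
    simp only [Psi, Real.sin_zero]
    nlinarith [mul_pos hf hπ, hπ2]
  have hπv : Psi F ω R f π < 0 := by
    simp only [Psi, Real.sin_pi]
    nlinarith [mul_pos hf hπ, hπ2]
  have hmid : 0 < Psi F ω R f (π/2) := by
    simp only [Psi, Real.sin_pi_div_two]
    nlinarith
  have hcont : Continuous (Psi F ω R f) := by
    unfold Psi; continuity
  have hhalf : (0:ℝ) < π/2 := by linarith
  refine ⟨h0, hπv, hmid, ?_, ?_⟩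
  · have := intermediate_value_Ioo (le_of_lt hhalf) hcont.continuousOn
      (a := 0) (b := π/2)
    have hz : (0:ℝ) ∈ Set.Ioo (Psi F ω R f 0) (Psi F ω R f (π/2)) := ⟨h0, hmid⟩
    obtain ⟨θ, hθ, hθ0⟩ := this hz
    exact ⟨θ, hθ, hθ0⟩
  · have := intermediate_value_Ioo' (by linarith : π/2 ≤ π) hcont.continuousOn
      (a := π/2) (b := π)
    have hz : (0:ℝ) ∈ Set.Ioo (Psi F ω R f π) (Psi F ω R f (π/2)) := ⟨hπv, hmid⟩
    obtain ⟨θ, hθ, hθ0⟩ := this hz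
    exact ⟨θ, hθ, hθ0⟩
end

section
/- Suppose E : [0, T₀] → ℝ is nonnegative, differentiable on the complement of a finite set, and satisfies |E'(t)| ≤ (F+f)·√(2E(t)) wherever differentiable, with E continuous. Then √(E(t)) ≤ √(E(0)) + (F+f)·t/√2 for all t ∈ [0, T₀]. -/
open Set Filter Real Topology

/-- Energy bound: if E ≥ 0 is continuous on [0, T₀], differentiable off a
finite set, and satisfies |E'(t)| ≤ (F+f)√(2E(t)) wherever differentiable,
then √(E(t)) ≤ √(E(0)) + (F+f)·t/√2 on [0, T₀]. -/
theorem energy_growth_bound (F f T₀ : ℝ) (hF : 0 < F) (hf : 0 < f)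
    (hT : 0 < T₀) (E : ℝ → ℝ)
    (hcont : ContinuousOn E (Set.Icc 0 T₀))
    (hnonneg : ∀ t ∈ Set.Icc 0 T₀, 0 ≤ E t)
    (S : Finset ℝ)
    (hdiff : ∀ t ∈ Set.Ioo 0 T₀, t ∉ S → DifferentiableAt ℝ E t)
    (hbound : ∀ t ∈ Set.Ioo 0 T₀, t ∉ S →
      |deriv E t| ≤ (F + f) * Real.sqrt (2 * E t)) :
    ∀ t ∈ Set.Icc 0 T₀,
      Real.sqrt (E t) ≤ Real.sqrt (E 0) + (F + f) * t / Real.sqrt 2 := by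
  set C : ℝ := (F + f) / Real.sqrt 2 with hC
  have hs2 : (0:ℝ) < Real.sqrt 2 := Real.sqrt_pos.2 (by norm_num)
  have hCpos : 0 < C := div_pos (by linarith) hs2
  -- main claim for each ε > 0
  have main : ∀ ε : ℝ, 0 < ε → ∀ t ∈ Set.Icc 0 T₀,
      Real.sqrt (E t + ε) ≤ Real.sqrt (E 0 + ε) + C * t := by
    intro ε hε
    set g : ℝ → ℝ := fun t => Real.sqrt (E t + ε) with hg
    have hgcont : ContinuousOn g (Icc 0 T₀) :=
      Real.continuous_sqrt.comp_continuousOn (hcont.add continuousOn_const)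
    -- derivative bound off S
    have hgderiv : ∀ t ∈ Ioo 0 T₀, t ∉ S →
        HasDerivAt g (1 / (2 * Real.sqrt (E t + ε)) * deriv E t) t := by
      intro t ht hts
      have hpos : 0 < E t + ε := by
        have := hnonneg t (Ioo_subset_Icc_self ht); linarith
      have hE : HasDerivAt (fun t => E t + ε) (deriv E t) t :=
        ((hdiff t ht hts).hasDerivAt).add_const ε
      exact (Real.hasDerivAt_sqrt (ne_of_gt hpos)).comp t hE
    have hgbound : ∀ t ∈ Ioo 0 T₀, t ∉ S →
        ‖1 / (2 * Real.sqrt (E t + ε)) * deriv E t‖ ≤ C := by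
      intro t ht hts
      have he : 0 ≤ E t := hnonneg t (Ioo_subset_Icc_self ht)
      have hpos : 0 < E t + ε := by linarith
      have hspos : 0 < Real.sqrt (E t + ε) := Real.sqrt_pos.2 hpos
      rw [Real.norm_eq_abs, abs_mul, abs_of_pos (by positivity : (0:ℝ) < 1 / (2 * Real.sqrt (E t + ε)))]
      have h1 : |deriv E t| ≤ (F + f) * Real.sqrt (2 * E t) := hbound t ht hts
      have h2 : Real.sqrt (2 * E t) = Real.sqrt 2 * Real.sqrt (E t) := Real.sqrt_mul (by norm_num) _
      have h3 : Real.sqrt (E t) ≤ Real.sqrt (E t + ε) := Real.sqrt_le_sqrt (by linarith)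
      calc 1 / (2 * Real.sqrt (E t + ε)) * |deriv E t|
          ≤ 1 / (2 * Real.sqrt (E t + ε)) * ((F + f) * (Real.sqrt 2 * Real.sqrt (E t + ε))) := by
            apply mul_le_mul_of_nonneg_left _ (by positivity)
            rw [h2] at h1
            refine h1.trans ?_
            have : (0:ℝ) ≤ (F + f) * Real.sqrt 2 := by positivity
            nlinarith [Real.sqrt_nonneg (E t)]
        _ = C := by
            have hss : Real.sqrt 2 * Real.sqrt 2 = 2 := Real.mul_self_sqrt (by norm_num)
            rw [hC, eq_div_iff hs2.ne']
            field_simp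
            linear_combination hss
    -- segment estimate over intervals avoiding S
    have seg : ∀ x z : ℝ, 0 ≤ x → x < z → z ≤ T₀ → (Ioo x z ∩ (S : Set ℝ) = ∅) →
        g z - g x ≤ C * (z - x) := by
      intro x z hx0 hxz hzT hdisj
      have key : ∀ x' ∈ Ioo x z, g z - g x' ≤ C * (z - x') := by
        intro x' hx'
        have h1 : ∀ u ∈ Icc x' z, u ∈ Icc 0 T₀ := fun u hu =>
          ⟨le_trans (le_trans hx0 hx'.1.le) hu.1, le_trans hu.2 hzT⟩
        have h2 : ∀ u ∈ Ico x' z, u ∈ Ioo 0 T₀ ∧ u ∉ S := by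
          intro u hu
          have huxz : u ∈ Ioo x z := ⟨lt_of_lt_of_le hx'.1 hu.1, hu.2⟩
          refine ⟨⟨lt_of_le_of_lt hx0 huxz.1, lt_of_lt_of_le hu.2 hzT⟩, ?_⟩
          intro hus
          have : u ∈ Ioo x z ∩ (S : Set ℝ) := ⟨huxz, hus⟩
          rw [hdisj] at this
          exact notMem_empty u this
        have := norm_image_sub_le_of_norm_deriv_right_le_segment
          (f := g) (a := x') (b := z)
          (f' := fun t => 1 / (2 * Real.sqrt (E t + ε)) * deriv E t)
          (hgcont.mono (fun u hu => h1 u hu))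
          (fun u hu => ((hgderiv u (h2 u hu).1 (h2 u hu).2).hasDerivWithinAt))
          (fun u hu => hgbound u (h2 u hu).1 (h2 u hu).2)
          z (right_mem_Icc.2 hx'.2.le)
        calc g z - g x' ≤ ‖g z - g x'‖ := le_abs_self _
          _ ≤ C * (z - x') := this
      -- take limit x' → x⁺
      haveI hne : (𝓝[Ioo x z] x).NeBot := left_nhdsWithin_Ioo_neBot hxz
      have hsub : Ioo x z ⊆ Icc 0 T₀ := fun u hu =>
        ⟨le_trans hx0 hu.1.le, le_trans hu.2.le hzT⟩
      have hgx : Tendsto g (𝓝[Ioo x z] x) (𝓝 (g x)) := by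
        have : ContinuousWithinAt g (Icc 0 T₀) x :=
          hgcont x ⟨hx0, le_trans hxz.le hzT⟩
        exact this.mono hsub
      have ht1 : Tendsto (fun x' => g z - g x') (𝓝[Ioo x z] x) (𝓝 (g z - g x)) :=
        tendsto_const_nhds.sub hgx
      have ht2 : Tendsto (fun x' => C * (z - x')) (𝓝[Ioo x z] x) (𝓝 (C * (z - x))) :=
        ((continuous_const.mul (continuous_const.sub continuous_id)).tendsto x).mono_left
          nhdsWithin_le_nhds
      exact le_of_tendsto_of_tendsto ht1 ht2
        (eventually_mem_nhdsWithin.mono key)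
    -- fencing
    have fence := image_le_of_liminf_slope_right_le_deriv_boundary
      (f := g) (a := 0) (b := T₀) hgcont
      (B := fun t => g 0 + C * t) (B' := fun _ => C)
      (by simp) (continuousOn_const.add (continuousOn_const.mul continuousOn_id))
      (fun x _ => by
        have : HasDerivAt (fun t => g 0 + C * t) C x := by
          simpa using ((hasDerivAt_id x).const_mul C).const_add (g 0)
        exact this.hasDerivWithinAt)
      ?_
    · exact fun t ht => fence ht
    · intro x hx r hr
      -- choose z₀ > x with (x,z₀)∩S = ∅ and z₀ ≤ T₀
      obtain ⟨z₀, hz₀x, hz₀T, hz₀S⟩ : ∃ z₀, x < z₀ ∧ z₀ ≤ T₀ ∧ Ioo x z₀ ∩ (S : Set ℝ) = ∅ := by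
        by_cases hSn : (S.filter (fun s => x < s)).Nonempty
        · set m := (S.filter (fun s => x < s)).min' hSn with hm
          have hmS := (S.filter (fun s => x < s)).min'_mem hSn
          rw [Finset.mem_filter] at hmS
          refine ⟨min T₀ m, lt_min hx.2 hmS.2, min_le_left _ _, ?_⟩
          ext u; simp only [mem_inter_iff, mem_Ioo, mem_empty_iff_false, iff_false]
          rintro ⟨⟨hu1, hu2⟩, huS⟩
          have : m ≤ u := (S.filter (fun s => x < s)).min'_le u (Finset.mem_filter.2 ⟨huS, hu1⟩)
          exact absurd (lt_of_lt_of_le hu2 (min_le_right _ _)) (not_lt.2 this)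
        · refine ⟨T₀, hx.2, le_rfl, ?_⟩
          ext u; simp only [mem_inter_iff, mem_Ioo, mem_empty_iff_false, iff_false]
          rintro ⟨⟨hu1, _⟩, huS⟩
          exact hSn ⟨u, Finset.mem_filter.2 ⟨huS, hu1⟩⟩
      apply Filter.Eventually.frequently
      filter_upwards [Ioo_mem_nhdsGT hz₀x] with z hz
      obtain ⟨hz1, hz2⟩ := hz
      have hseg := seg x z hx.1 hz1 (hz2.le.trans hz₀T)
        (by
          ext u; simp only [mem_inter_iff, mem_Ioo, mem_empty_iff_false, iff_false]
          rintro ⟨⟨h1, h2⟩, h3⟩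
          have : u ∈ Ioo x z₀ ∩ (S : Set ℝ) := ⟨⟨h1, h2.trans hz2⟩, h3⟩
          rw [hz₀S] at this; exact absurd this (notMem_empty u))
      rw [slope_def_field]
      rw [div_lt_iff₀ (by linarith : (0:ℝ) < z - x)]
      calc g z - g x ≤ C * (z - x) := hseg
        _ < r * (z - x) := by
            exact mul_lt_mul_of_pos_right hr (by linarith)
  -- take ε → 0
  intro t ht
  have h1 : ∀ ε : ℝ, 0 < ε →
      Real.sqrt (E t) ≤ Real.sqrt (E 0 + ε) + C * t := by
    intro ε hε
    calc Real.sqrt (E t) ≤ Real.sqrt (E t + ε) := Real.sqrt_le_sqrt (by linarith)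
      _ ≤ Real.sqrt (E 0 + ε) + C * t := main ε hε t ht
  have htend : Tendsto (fun ε => Real.sqrt (E 0 + ε) + C * t) (𝓝[>] (0:ℝ))
      (𝓝 (Real.sqrt (E 0) + C * t)) := by
    have : Tendsto (fun ε : ℝ => Real.sqrt (E 0 + ε)) (𝓝 (0:ℝ)) (𝓝 (Real.sqrt (E 0))) := by
      have : Continuous (fun ε : ℝ => Real.sqrt (E 0 + ε)) :=
        Real.continuous_sqrt.comp (continuous_const.add continuous_id)
      simpa using this.tendsto 0
    exact ((this.mono_left nhdsWithin_le_nhds).add tendsto_const_nhds)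
  have := ge_of_tendsto htend (by
    filter_upwards [self_mem_nhdsWithin] with ε hε
    exact h1 ε hε)
  calc Real.sqrt (E t) ≤ Real.sqrt (E 0) + C * t := this
    _ = Real.sqrt (E 0) + (F + f) * t / Real.sqrt 2 := by rw [hC]; ring
end
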